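/- (Lipschitz gradient of the smoothed misfit.) Let a > 0, tr ∈ ℝ, N ∈ ℕ, and I ∈ ℝ^N with 0 ≤ I_i ≤ 1 for all i. Define h_a : ℝ^N → ℝ by h_a(V) = Σ_i (Sig_a(V_i²) − I_i)², where Sig_a(x) = 1/(1 + exp(−a(x − tr))). Then h_a is differentiable on ℝ^N and there exists a constant L_h > 0 such that ‖∇h_a(V) − ∇h_a(W)‖ ≤ L_h ‖V − W‖ for all V, W ∈ ℝ^N, i.e. ∇h_a is globally Lipschitz continuous. -/

import Mathlib

/-- The sigmoid function `Sig_a(x) = 1/(1 + exp(-a(x - tr)))`. -/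
noncomputable def Sig (a tr x : ℝ) : ℝ := 1 / (1 + Real.exp (-a * (x - tr)))

/-- The smoothed misfit `h_a(V) = Σᵢ (Sig_a(Vᵢ²) − Iᵢ)²`. -/
noncomputable def misfit (a tr : ℝ) {N : ℕ} (I : Fin N → ℝ)
    (V : EuclideanSpace ℝ (Fin N)) : ℝ :=
  ∑ i, (Sig a tr (V i ^ 2) - I i) ^ 2

noncomputable def auxE (a tr t : ℝ) : ℝ := Real.exp (a*tr - a*t^2)
noncomputable def auxQ (a tr t : ℝ) : ℝ := auxE a tr t / (1 + auxE a tr t)^2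
noncomputable def auxPsi (a tr t : ℝ) : ℝ := (1 + auxE a tr t)⁻¹
noncomputable def auxG (a tr c t : ℝ) : ℝ :=
  2*(auxPsi a tr t - c) * (2*a*t * auxQ a tr t)
noncomputable def auxG' (a tr c t : ℝ) : ℝ :=
  8*a^2*t^2*(auxQ a tr t)^2 + 4*a*(auxPsi a tr t - c)*(auxQ a tr t)
    - 8*a^2*t^2*(auxPsi a tr t - c)*(auxQ a tr t)*((1 - auxE a tr t)/(1 + auxE a tr t))

lemma auxE_pos (a tr t : ℝ) : 0 < auxE a tr t := Real.exp_pos _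

lemma one_add_auxE_pos (a tr t : ℝ) : 0 < 1 + auxE a tr t := by
  have := auxE_pos a tr t; linarith

lemma Sig_sq (a tr t : ℝ) : Sig a tr (t^2) = auxPsi a tr t := by
  have h : -a*(t^2 - tr) = a*tr - a*t^2 := by ring
  rw [Sig, auxPsi, auxE, h, one_div]

lemma hasDerivAt_auxE (a tr t : ℝ) :
    HasDerivAt (auxE a tr) (auxE a tr t * -(a*(2*t))) t := by
  have h1 : HasDerivAt (fun t : ℝ => a*tr - a*t^2) (-(a*(2*t))) t := by
    have h := ((hasDerivAt_pow 2 t).const_mul a).const_sub (a*tr)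
    refine h.congr_deriv ?_
    ring
  have := h1.exp
  exact this

lemma hasDerivAt_auxPsi (a tr t : ℝ) :
    HasDerivAt (auxPsi a tr) (2*a*t * auxQ a tr t) t := by
  have hne : (1 : ℝ) + auxE a tr t ≠ 0 := (one_add_auxE_pos a tr t).ne'
  have h := ((hasDerivAt_auxE a tr t).const_add 1).inv hne
  have heq : -(auxE a tr t * -(a*(2*t))) / (1 + auxE a tr t)^2
      = 2*a*t * auxQ a tr t := by
    rw [auxQ]; field_simp
  rw [heq] at h
  exact h.congr_deriv rfl

lemma hasDerivAt_phi (a tr c t : ℝ) :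
    HasDerivAt (fun t => (Sig a tr (t^2) - c)^2) (auxG a tr c t) t := by
  have h := ((hasDerivAt_auxPsi a tr t).sub_const c).pow 2
  have heq : (2:ℕ) * (auxPsi a tr t - c)^(2-1) * (2*a*t * auxQ a tr t)
      = auxG a tr c t := by
    rw [auxG]; push_cast; ring
  rw [heq] at h
  have hfun : (fun t => (Sig a tr (t^2) - c)^2) = fun t => (auxPsi a tr t - c)^2 := by
    funext s; rw [Sig_sq]
  rw [hfun]
  exact h

lemma hasDerivAt_auxG (a tr c t : ℝ) :
    HasDerivAt (auxG a tr c) (auxG' a tr c t) t := by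
  have hne : (1 : ℝ) + auxE a tr t ≠ 0 := (one_add_auxE_pos a tr t).ne'
  have hE := hasDerivAt_auxE a tr t
  have h1 : HasDerivAt (fun t => 2*(auxPsi a tr t - c)) (2*(2*a*t * auxQ a tr t)) t :=
    ((hasDerivAt_auxPsi a tr t).sub_const c).const_mul 2
  have hq : HasDerivAt (auxQ a tr)
      ((auxE a tr t * -(a*(2*t)) * (1 + auxE a tr t)^2 -
        auxE a tr t * ((2:ℕ) * (1 + auxE a tr t)^(2-1) * (auxE a tr t * -(a*(2*t)))))
        / ((1 + auxE a tr t)^2)^2) t := by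
    have hden := (hE.const_add 1).pow 2
    exact hE.div hden (pow_ne_zero 2 hne)
  have h2 : HasDerivAt (fun t => 2*a*t * auxQ a tr t)
      (2*a * auxQ a tr t + 2*a*t *
        ((auxE a tr t * -(a*(2*t)) * (1 + auxE a tr t)^2 -
        auxE a tr t * ((2:ℕ) * (1 + auxE a tr t)^(2-1) * (auxE a tr t * -(a*(2*t)))))
        / ((1 + auxE a tr t)^2)^2)) t := by
    have hid : HasDerivAt (fun t : ℝ => 2*a*t) (2*a) t := by
      simpa using (hasDerivAt_id t).const_mul (2*a)
    exact hid.mul hq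
  have h := h1.mul h2
  refine h.congr_deriv ?_
  rw [auxG', auxQ, auxPsi]
  push_cast
  field_simp
  ring

lemma auxQ_pos (a tr t : ℝ) : 0 < auxQ a tr t := by
  rw [auxQ]
  exact div_pos (auxE_pos a tr t) (pow_pos (one_add_auxE_pos a tr t) 2)

lemma auxQ_le (a tr t : ℝ) : auxQ a tr t ≤ 1/4 := by
  rw [auxQ, div_le_iff₀ (pow_pos (one_add_auxE_pos a tr t) 2)]
  nlinarith [sq_nonneg (1 - auxE a tr t)]

lemma sq_mul_auxQ_le (a tr : ℝ) (ha : 0 < a) (t : ℝ) :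
    t^2 * auxQ a tr t ≤ Real.exp (a*tr) / a := by
  have hE := auxE_pos a tr t
  have h1 : auxQ a tr t ≤ auxE a tr t := by
    rw [auxQ]
    apply div_le_self hE.le
    nlinarith
  have h2 : t^2 * auxE a tr t ≤ Real.exp (a*tr) / a := by
    rw [auxE, le_div_iff₀ ha, Real.exp_sub]
    have h3 := Real.add_one_le_exp (a*t^2)
    have h4 := Real.exp_pos (a*tr)
    have h5 := Real.exp_pos (a*t^2)
    calc t^2 * (Real.exp (a*tr) / Real.exp (a*t^2)) * a
        = Real.exp (a*tr) * ((a*t^2) / Real.exp (a*t^2)) := by field_simp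
      _ ≤ Real.exp (a*tr) * 1 := by
          apply mul_le_mul_of_nonneg_left _ h4.le
          rw [div_le_one h5]; nlinarith [sq_nonneg t]
      _ = Real.exp (a*tr) := by ring
  calc t^2 * auxQ a tr t ≤ t^2 * auxE a tr t := by
        apply mul_le_mul_of_nonneg_left h1 (sq_nonneg t)
    _ ≤ Real.exp (a*tr) / a := h2

lemma auxPsi_mem (a tr t : ℝ) : 0 < auxPsi a tr t ∧ auxPsi a tr t ≤ 1 := by
  have h := one_add_auxE_pos a tr t
  have hE := auxE_pos a tr t
  constructor
  · exact inv_pos.mpr h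
  · rw [auxPsi]
    rw [inv_le_one_iff₀]
    right; linarith

lemma auxG'_bound (a tr c : ℝ) (ha : 0 < a) (hc0 : 0 ≤ c) (hc1 : c ≤ 1) (t : ℝ) :
    |auxG' a tr c t| ≤ a + 10 * a * Real.exp (a*tr) := by
  set q := auxQ a tr t with hq
  set u := t^2 * q with hu
  set v := auxPsi a tr t - c with hv
  set e := Real.exp (a*tr) with he
  have hqpos := auxQ_pos a tr t
  have hq4 := auxQ_le a tr t
  have huK : u ≤ e / a := sq_mul_auxQ_le a tr ha t
  have hunn : 0 ≤ u := mul_nonneg (sq_nonneg t) hqpos.le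
  have hpsi := auxPsi_mem a tr t
  have hv1 : |v| ≤ 1 := by rw [hv, abs_le]; constructor <;> linarith [hpsi.1, hpsi.2]
  have hE := auxE_pos a tr t
  have hw1 : |(1 - auxE a tr t)/(1 + auxE a tr t)| ≤ 1 := by
    rw [abs_div, div_le_one (by positivity)]
    rw [abs_of_pos (one_add_auxE_pos a tr t)]
    rw [abs_le]; constructor <;> linarith
  set w := (1 - auxE a tr t)/(1 + auxE a tr t) with hwdef
  have hepos : 0 < e := Real.exp_pos _
  have hau : a * u ≤ e := by
    rw [← le_div_iff₀' ha]; exact huK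
  have hGeq : auxG' a tr c t = 8*a^2*(u*q) + 4*a*(v*q) - 8*a^2*(u*(v*w)) := by
    rw [auxG', hu, hv, hq, hwdef]; ring
  rw [hGeq]
  have t1 : |8*a^2*(u*q)| ≤ 2*a*e := by
    rw [abs_of_nonneg (by positivity)]
    calc 8*a^2*(u*q) = 8*a*(a*u)*q := by ring
      _ ≤ 8*a*e*(1/4) := by
          apply mul_le_mul (by nlinarith [mul_nonneg hunn ha.le]) hq4 hqpos.le (by positivity)
      _ = 2*a*e := by ring
  have t2 : |4*a*(v*q)| ≤ a := by
    have hvq : |v*q| ≤ 1/4 := by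
      rw [abs_mul, abs_of_pos hqpos]
      calc |v| * q ≤ 1 * (1/4) := mul_le_mul hv1 hq4 hqpos.le zero_le_one
        _ = 1/4 := by ring
    have habs : |4*a*(v*q)| = 4*a*|v*q| := by
      rw [abs_mul, abs_of_nonneg (by positivity : (0:ℝ) ≤ 4*a)]
    rw [habs]
    nlinarith [mul_le_mul_of_nonneg_left hvq (by positivity : (0:ℝ) ≤ 4*a)]
  have t3 : |8*a^2*(u*(v*w))| ≤ 8*a*e := by
    have hvw : |v*w| ≤ 1 := by
      rw [abs_mul]
      calc |v| * |w| ≤ 1 * 1 := mul_le_mul hv1 hw1 (abs_nonneg _) zero_le_one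
        _ = 1 := by ring
    have h5 : |u*(v*w)| ≤ e/a := by
      rw [abs_mul, abs_of_nonneg hunn]
      calc u * |v*w| ≤ u * 1 := mul_le_mul_of_nonneg_left hvw hunn
        _ = u := by ring
        _ ≤ e/a := huK
    have habs : |8*a^2*(u*(v*w))| = 8*a^2*|u*(v*w)| := by
      rw [abs_mul, abs_of_nonneg (by positivity : (0:ℝ) ≤ 8*a^2)]
    rw [habs]
    have h6 := mul_le_mul_of_nonneg_left h5 (by positivity : (0:ℝ) ≤ 8*a^2)
    have h7 : 8*a^2*(e/a) = 8*a*e := by field_simp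
    linarith
  have a1 := abs_le.mp t1
  have a2 := abs_le.mp t2
  have a3 := abs_le.mp t3
  have b1 := le_abs_self (8*a^2*(u*q))
  have b1' := neg_abs_le (8*a^2*(u*q))
  have b2 := le_abs_self (4*a*(v*q))
  have b2' := neg_abs_le (4*a*(v*q))
  have b3 := le_abs_self (8*a^2*(u*(v*w)))
  have b3' := neg_abs_le (8*a^2*(u*(v*w)))
  rw [abs_le]
  constructor <;> linarith

lemma auxG_lipschitz (a tr c : ℝ) (ha : 0 < a) (hc0 : 0 ≤ c) (hc1 : c ≤ 1) (x y : ℝ) :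
    |auxG a tr c x - auxG a tr c y| ≤ (a + 10 * a * Real.exp (a*tr)) * |x - y| := by
  have := convex_univ.norm_image_sub_le_of_norm_hasDerivWithin_le
    (f := auxG a tr c) (f' := auxG' a tr c) (C := a + 10 * a * Real.exp (a*tr))
    (fun z _ => (hasDerivAt_auxG a tr c z).hasDerivWithinAt)
    (fun z _ => by simpa [Real.norm_eq_abs] using auxG'_bound a tr c ha hc0 hc1 z)
    (Set.mem_univ y) (Set.mem_univ x)
  simpa [Real.norm_eq_abs] using this

/-- Lipschitz gradient of the smoothed misfit: `h_a` is differentiable and its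
gradient is globally Lipschitz continuous. -/
theorem misfit_gradient_lipschitz (a tr : ℝ) (ha : 0 < a) (N : ℕ)
    (I : Fin N → ℝ) (hI : ∀ i, 0 ≤ I i ∧ I i ≤ 1) :
    Differentiable ℝ (misfit a tr I) ∧
      ∃ Lh : ℝ, 0 < Lh ∧ ∀ V W : EuclideanSpace ℝ (Fin N),
        ‖gradient (misfit a tr I) V - gradient (misfit a tr I) W‖ ≤
          Lh * ‖V - W‖ := by
  classical
  set L := a + 10 * a * Real.exp (a*tr) with hL
  have hLpos : 0 < L := by positivity
  set G : EuclideanSpace ℝ (Fin N) → EuclideanSpace ℝ (Fin N) :=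
    fun V => (WithLp.equiv 2 (Fin N → ℝ)).symm (fun i => auxG a tr (I i) (V i)) with hGdef
  have hgrad : ∀ V, HasGradientAt (misfit a tr I) (G V) V := by
    intro V
    rw [hasGradientAt_iff_hasFDerivAt]
    have hsum : HasFDerivAt (misfit a tr I)
        (∑ i, auxG a tr (I i) (V i) •
          (EuclideanSpace.proj i : EuclideanSpace ℝ (Fin N) →L[ℝ] ℝ)) V := by
      have hproj : ∀ i : Fin N, HasFDerivAt (fun y : EuclideanSpace ℝ (Fin N) => y i)
          (EuclideanSpace.proj i (𝕜 := ℝ)) V := fun i =>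
        ContinuousLinearMap.hasFDerivAt (EuclideanSpace.proj i : EuclideanSpace ℝ (Fin N) →L[ℝ] ℝ)
      exact HasFDerivAt.fun_sum (fun i _ =>
        by have := (hasDerivAt_phi a tr (I i) (V i)).comp_hasFDerivAt V (hproj i); exact this)
    refine hsum.congr_fderiv ?_
    refine ContinuousLinearMap.ext fun w => ?_
    simp only [InnerProductSpace.toDual_apply_apply, ContinuousLinearMap.sum_apply,
      ContinuousLinearMap.smul_apply, smul_eq_mul]
    rw [PiLp.inner_apply]
    refine Finset.sum_congr rfl fun i _ => ?_
    simp [hGdef, WithLp.equiv_symm_apply, mul_comm]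
  constructor
  · exact fun V => (hgrad V).differentiableAt
  refine ⟨L, hLpos, fun V W => ?_⟩
  rw [(hgrad V).gradient, (hgrad W).gradient]
  rw [EuclideanSpace.norm_eq, EuclideanSpace.norm_eq]
  have key : ∀ i, ‖(G V - G W) i‖^2 ≤ L^2 * ‖(V - W) i‖^2 := by
    intro i
    have hsub : (G V - G W) i = auxG a tr (I i) (V i) - auxG a tr (I i) (W i) := rfl
    have hsub2 : (V - W) i = V i - W i := rfl
    rw [hsub, hsub2, Real.norm_eq_abs, Real.norm_eq_abs]
    have h := auxG_lipschitz a tr (I i) ha (hI i).1 (hI i).2 (V i) (W i)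
    calc |auxG a tr (I i) (V i) - auxG a tr (I i) (W i)|^2
        ≤ (L * |V i - W i|)^2 := by
          apply pow_le_pow_left₀ (abs_nonneg _) h
      _ = L^2 * |V i - W i|^2 := by ring
  calc Real.sqrt (∑ i, ‖(G V - G W) i‖^2)
      ≤ Real.sqrt (∑ i, L^2 * ‖(V - W) i‖^2) :=
        Real.sqrt_le_sqrt (Finset.sum_le_sum fun i _ => key i)
    _ = Real.sqrt (L^2 * ∑ i, ‖(V - W) i‖^2) := by rw [Finset.mul_sum]
    _ = L * Real.sqrt (∑ i, ‖(V - W) i‖^2) := by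
        rw [Real.sqrt_mul (sq_nonneg L), Real.sqrt_sq hLpos.le]
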